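/- The bicyclic monoid B = ⟨a,b | ab = 1⟩ satisfies Adian's identity: for all x, y in B, xy²x(xy)xy²x = xy²x(yx)xy²x. -/

import Mathlib

/-- The defining relation of the bicyclic monoid `⟨a, b | ab = 1⟩`,
with `a` encoded as `true` and `b` as `false`. -/
def bicyclicRel : FreeMonoid Bool → FreeMonoid Bool → Prop :=
  fun u v => u = FreeMonoid.of true * FreeMonoid.of false ∧ v = 1

/-- The bicyclic monoid `⟨a, b | ab = 1⟩`. -/
abbrev Bicyclic : Type := PresentedMonoid bicyclicRel

namespace BicyclicAux

noncomputable def A : Bicyclic := PresentedMonoid.of bicyclicRel true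
noncomputable def B : Bicyclic := PresentedMonoid.of bicyclicRel false

lemma hAB : A * B = 1 := by
  show (Quotient.mk _ _ : (conGen bicyclicRel).Quotient) = Quotient.mk _ _
  exact Quotient.sound (ConGen.Rel.of _ _ ⟨rfl, rfl⟩)

lemma key : ∀ n p : ℕ, A ^ n * B ^ p = B ^ (p - n) * A ^ (n - p) := by
  intro n
  induction n with
  | zero => intro p; simp
  | succ n ih =>
    intro p
    cases p with
    | zero => simp
    | succ p =>
      have : A ^ (n+1) * B ^ (p+1) = A ^ n * (A * B) * B ^ p := by
        rw [pow_succ, pow_succ']; group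
      rw [this, hAB, mul_one, ih]
      congr 1 <;> congr 1 <;> omega

lemma surj (x : Bicyclic) : ∃ m n : ℕ, x = B ^ m * A ^ n := by
  refine PresentedMonoid.inductionOn x ?_
  intro w
  · induction w using FreeMonoid.inductionOn' with
    | one => exact ⟨0, 0, by simp⟩
    | of_mul c w ih =>
      obtain ⟨m, n, hmn⟩ := ih
      rw [map_mul, hmn]
      cases c with
      | false =>
        refine ⟨m + 1, n, ?_⟩
        rw [show (PresentedMonoid.mk bicyclicRel) (FreeMonoid.of false) = B from rfl,
          pow_succ', mul_assoc]
      | true =>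
        refine ⟨m - 1, (1 - m) + n, ?_⟩
        have : (PresentedMonoid.mk bicyclicRel) (FreeMonoid.of true) = A := rfl
        rw [this, ← mul_assoc]
        have h1 : A * B ^ m = B ^ (m - 1) * A ^ (1 - m) := by
          simpa using key 1 m
        rw [show A = A ^ 1 from (pow_one A).symm] at h1 ⊢
        rw [h1, mul_assoc, ← pow_add]

lemma mulNF (m n p q : ℕ) :
    (B ^ m * A ^ n) * (B ^ p * A ^ q)
      = B ^ (m + (p - n)) * A ^ (q + (n - p)) := by
  have : (B ^ m * A ^ n) * (B ^ p * A ^ q) = B ^ m * (A ^ n * B ^ p) * A ^ q := by group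
  rw [this, key n p, pow_add, ← mul_assoc, ← pow_add, mul_assoc, ← pow_add,
    Nat.add_comm (n-p) q]

end BicyclicAux

set_option maxHeartbeats 1000000 in
/-- The bicyclic monoid satisfies Adian's identity
`xy²x(xy)xy²x = xy²x(yx)xy²x`. -/
theorem bicyclic_satisfies_adian_identity (x y : Bicyclic) :
    x * y ^ 2 * x * (x * y) * (x * y ^ 2 * x) =
      x * y ^ 2 * x * (y * x) * (x * y ^ 2 * x) := by
  obtain ⟨m, n, rfl⟩ := BicyclicAux.surj x
  obtain ⟨p, q, rfl⟩ := BicyclicAux.surj y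
  rw [sq]
  have E : ∀ m n p q : ℕ, ∃ r s : ℕ, (BicyclicAux.B ^ m * BicyclicAux.A ^ n) * (BicyclicAux.B ^ p * BicyclicAux.A ^ q)
      = BicyclicAux.B ^ r * BicyclicAux.A ^ s ∧ r = m + (p - n) ∧ s + m + p = r + n + q :=
    fun m n p q => ⟨_, _, BicyclicAux.mulNF m n p q, rfl, by omega⟩
  obtain ⟨a1, b1, e1, h1, h1'⟩ := E p q p q
  rw [e1]
  obtain ⟨a2, b2, e2, h2, h2'⟩ := E m n a1 b1
  rw [e2]
  obtain ⟨a3, b3, e3, h3, h3'⟩ := E a2 b2 m n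
  rw [e3]
  have L1 : m ≤ a3 ∧ m + p ≤ a3 + n ∧ m + 2 * p ≤ a3 + n + q ∧ 2 * m + 2 * p ≤ a3 + n + 2 * q := by
    omega
  clear h1 h2 h3
  obtain ⟨a4, b4, e4, h4, h4'⟩ := E m n p q
  rw [e4]
  obtain ⟨a5, b5, e5, h5, h5'⟩ := E p q m n
  rw [e5]
  obtain ⟨a6, b6, e6, h6, h6'⟩ := E a3 b3 a4 b4
  rw [e6]
  obtain ⟨a7, b7, e7, h7, h7'⟩ := E a3 b3 a5 b5
  rw [e7]
  obtain ⟨a8, b8, e8, h8, h8'⟩ := E a6 b6 a3 b3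
  rw [e8]
  obtain ⟨a9, b9, e9, h9, h9'⟩ := E a7 b7 a3 b3
  rw [e9]
  have ha : a8 = a9 := by omega
  clear h4 h5 h6 h7 h8 h9 e1 e2 e3 e4 e5 e6 e7 e8 e9 E
  rw [ha, show b8 = b9 by omega]
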